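/- arXiv:2407.13602 — 4 statements merged into one kernel-verified Lean document; each statement's English description precedes it below -/
import Mathlib

section
/- Let a, b, C be natural numbers and suppose F is a subgroup of (ℤ/a)^b with index [(ℤ/a)^b : F] ≤ C. Then there exists a subgroup F' ≤ F isomorphic to (ℤ/a')^b for some natural number a' with C!·a' ≥ a. -/
/-- If `F` is a subgroup of `(ℤ/a)^b` of index at most `C`, then `F` contains a subgroup
isomorphic to `(ℤ/a')^b` for some `a'` with `C! · a' ≥ a`. -/
theorem stmt_3 (a b C : ℕ) (F : AddSubgroup (Fin b → ZMod a)) (hF : F.index ≤ C) :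
    ∃ a' : ℕ, a ≤ C.factorial * a' ∧
      ∃ F' : AddSubgroup (Fin b → ZMod a), F' ≤ F ∧ Nonempty (F' ≃+ (Fin b → ZMod a')) := by
  rcases Nat.eq_zero_or_pos a with ha | ha
  · refine ⟨1, by omega, ⊥, bot_le, ⟨?_⟩⟩
    exact AddEquiv.ofUnique
  · haveI : NeZero a := ⟨ha.ne'⟩
    set n := F.index with hn
    haveI : F.FiniteIndex := AddSubgroup.finiteIndex_of_finite_quotient (H := F)
    have hn0 : n ≠ 0 := AddSubgroup.FiniteIndex.index_ne_zero
    set g := Nat.gcd a n with hg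
    have hg0 : g ≠ 0 := Nat.gcd_ne_zero_left ha.ne'
    set a' := a / g with ha'
    have hga : g * a' = a := Nat.mul_div_cancel' (Nat.gcd_dvd_left a n)
    have hfa : ((a' : ℤ) • ((g : ZMod a)) = 0) := by
      rw [zsmul_eq_mul]
      have h : ((a' * g : ℕ) : ZMod a) = 0 := by
        rw [mul_comm, hga]; exact ZMod.natCast_self a
      push_cast at h
      exact_mod_cast h
    let e : ZMod a' →+ ZMod a := ZMod.lift a' ⟨(zmultiplesHom (ZMod a)) (g : ZMod a), hfa⟩
    have hecoe : ∀ z : ℤ, e (z : ZMod a') = ((z * g : ℤ) : ZMod a) := by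
      intro z
      simp only [e, ZMod.lift_coe, zmultiplesHom_apply, zsmul_eq_mul]
      push_cast; ring
    have he : Function.Injective e := by
      rw [injective_iff_map_eq_zero]
      intro x hx
      obtain ⟨z, rfl⟩ := ZMod.intCast_surjective x
      rw [hecoe] at hx
      rw [ZMod.intCast_zmod_eq_zero_iff_dvd] at hx ⊢
      have hgz : (g : ℤ) ≠ 0 := by exact_mod_cast hg0
      have h2 : ((a' : ℤ) * g) ∣ z * g := by
        have hae : ((a : ℕ) : ℤ) = (a' : ℤ) * g := by
          exact_mod_cast congrArg (Nat.cast : ℕ → ℤ) (by rw [mul_comm]; exact hga.symm : a = a' * g)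
        rwa [hae] at hx
      exact (mul_dvd_mul_iff_right hgz).mp h2
    let ψ : (Fin b → ZMod a') →+ (Fin b → ZMod a) := e.compLeft (Fin b)
    have hψ : Function.Injective ψ := fun x y h => funext fun i => he (congrFun h i)
    refine ⟨a', ?_, ψ.range, ?_, ⟨(AddMonoidHom.ofInjective hψ).symm⟩⟩
    · have hgn : g ≤ n := Nat.le_of_dvd (Nat.pos_of_ne_zero hn0) (Nat.gcd_dvd_right a n)
      have h1 : g ≤ C.factorial := le_trans hgn (hF.trans (Nat.self_le_factorial C))
      calc a = g * a' := hga.symm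
        _ ≤ C.factorial * a' := Nat.mul_le_mul_right _ h1
    · rintro _ ⟨x, rfl⟩
      obtain ⟨u, v, huv⟩ : ∃ u v : ℤ, (g : ℤ) = a * u + n * v :=
        ⟨Nat.gcdA a n, Nat.gcdB a n, Nat.gcd_eq_gcd_ab a n⟩
      choose z hz using fun i => ZMod.intCast_surjective (x i)
      have key : ψ x = n • fun i => ((z i * v : ℤ) : ZMod a) := by
        funext i
        show e (x i) = n • ((z i * v : ℤ) : ZMod a)
        rw [← hz i, hecoe, nsmul_eq_mul,
          show ((n : ZMod a) * ((z i * v : ℤ) : ZMod a)) = (((n : ℤ) * (z i * v) : ℤ) : ZMod a) by push_cast; ring,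
          ZMod.intCast_eq_intCast_iff]
        exact (Int.modEq_iff_dvd.mpr ⟨-(u * z i), by linear_combination -(z i) * huv⟩)
      rw [key]
      exact AddSubgroup.nsmul_index_mem F _
end

section
/- The group with presentation ⟨a, b | [a, b²] = 1, [a², b] = 1⟩ is isomorphic to the semidirect product ℤ² ⋊_φ ℤ where φ(1) is the coordinate-swap matrix [[0,1],[1,0]]. -/
/-- The coordinate-swap automorphism of `ℤ²` (written multiplicatively). -/
def swapAut : MulAut (Multiplicative (Fin 2 → ℤ)) where
  toFun v := Multiplicative.ofAdd (fun i => Multiplicative.toAdd v (Equiv.swap (0 : Fin 2) 1 i))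
  invFun v := Multiplicative.ofAdd (fun i => Multiplicative.toAdd v (Equiv.swap (0 : Fin 2) 1 i))
  left_inv v := by
    apply Multiplicative.toAdd.injective
    funext i
    simp
  right_inv v := by
    apply Multiplicative.toAdd.injective
    funext i
    simp
  map_mul' v w := by
    apply Multiplicative.toAdd.injective
    funext i
    simp

/-- The homomorphism `ℤ → Aut(ℤ²)` sending `1` to the coordinate swap `[[0,1],[1,0]]`. -/
def φ8 : Multiplicative ℤ →* MulAut (Multiplicative (Fin 2 → ℤ)) :=
  zpowersHom _ swapAut

open scoped commutatorElement

/-- The relations `[a, b²] = 1` and `[a², b] = 1` on two generators. -/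
def rels8 : Set (FreeGroup (Fin 2)) :=
  {⁅FreeGroup.of (0 : Fin 2), (FreeGroup.of (1 : Fin 2)) ^ 2⁆, ⁅(FreeGroup.of (0 : Fin 2)) ^ 2, FreeGroup.of (1 : Fin 2)⁆}

namespace Stmt8Aux
open Multiplicative SemidirectProduct

abbrev Hp := (Multiplicative (Fin 2 → ℤ)) ⋊[φ8] Multiplicative ℤ

def e0 : Multiplicative (Fin 2 → ℤ) := ofAdd (Pi.single 0 1)
def e1 : Multiplicative (Fin 2 → ℤ) := ofAdd (Pi.single 1 1)

lemma φ8_one : φ8 (ofAdd 1) = swapAut := by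
  simp [φ8, zpowersHom_apply]

lemma φ8_neg_one : φ8 (ofAdd (-1)) = swapAut := by
  simp [φ8, zpowersHom_apply]; rfl

lemma swapAut_sq : swapAut * swapAut = 1 := by
  ext v
  simp [swapAut]

lemma φ8_two : φ8 (ofAdd 2) = 1 := by
  rw [show (ofAdd (2:ℤ)) = ofAdd 1 * ofAdd 1 from by rw [← ofAdd_add]; norm_num,
    map_mul, φ8_one, swapAut_sq]

lemma swap_e0 : swapAut e0 = e1 := by
  apply Multiplicative.toAdd.injective
  funext i
  fin_cases i <;> simp [swapAut, e0, e1, Equiv.swap_apply_def]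

lemma swap_e1 : swapAut e1 = e0 := by
  apply Multiplicative.toAdd.injective
  funext i
  fin_cases i <;> simp [swapAut, e0, e1, Equiv.swap_apply_def]

def a' : Hp := inr (ofAdd 1)
def b' : Hp := inl e1 * inr (ofAdd (-1))

lemma inr_mul_inl (g : Multiplicative ℤ) (v) :
    (inr g : Hp) * inl v = inl (φ8 g v) * inr g := by
  have h := SemidirectProduct.inl_aut (φ := φ8) g v
  rw [h, mul_assoc, ← map_mul, inv_mul_cancel, map_one, mul_one]

lemma inr_mul_inr (g h : Multiplicative ℤ) : (inr g : Hp) * inr h = inr (g * h) :=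
  (map_mul inr g h).symm

lemma inl_mul_inl (v w) : (inl v : Hp) * inl w = inl (v * w) :=
  (map_mul inl v w).symm

lemma b'_sq : b' * b' = inl (e1 * e0) * inr (ofAdd (-2)) := by
  rw [b', mul_assoc, ← mul_assoc (inr (ofAdd (-1))), inr_mul_inl, φ8_neg_one, swap_e1,
    mul_assoc, inr_mul_inr, ← mul_assoc, inl_mul_inl, ← ofAdd_add]
  norm_num

lemma relH1 : Commute a' (b' * b') := by
  rw [b'_sq, a']
  show _ * _ = _ * _
  rw [← mul_assoc, inr_mul_inl, map_mul, φ8_one, swap_e0, swap_e1, mul_assoc, inr_mul_inr,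
    mul_assoc, inr_mul_inr, ← ofAdd_add, ← ofAdd_add, mul_comm e0 e1]
  norm_num

lemma relH2 : Commute (a' * a') b' := by
  rw [b', a', inr_mul_inr, ← ofAdd_add]
  show _ * _ = _ * _
  rw [← mul_assoc, inr_mul_inl]
  norm_num [φ8_two, mul_assoc, inr_mul_inr, ← ofAdd_add]
  rw [← map_inv, inr_mul_inr, inr_mul_inr, mul_comm]

/-! ### The forward homomorphism -/

lemma hrelsH : ∀ r ∈ rels8, FreeGroup.lift (![a', b'] : Fin 2 → Hp) r = 1 := by
  intro r hr
  rcases hr with rfl | rfl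
  · rw [map_commutatorElement, commutatorElement_eq_one_iff_commute, map_pow, pow_two]
    simpa using relH1
  · rw [map_commutatorElement, commutatorElement_eq_one_iff_commute, map_pow, pow_two]
    simpa using relH2

def fwd : PresentedGroup rels8 →* Hp := PresentedGroup.toGroup hrelsH

@[simp] lemma fwd_of0 : fwd (.of 0) = a' := PresentedGroup.toGroup.of hrelsH
@[simp] lemma fwd_of1 : fwd (.of 1) = b' := PresentedGroup.toGroup.of hrelsH

/-! ### Generators of the presented group and their relations -/

def ga : PresentedGroup rels8 := .of 0
def gb : PresentedGroup rels8 := .of 1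

lemma mk_rel_one {r} (hr : r ∈ rels8) : PresentedGroup.mk rels8 r = 1 :=
  (QuotientGroup.eq_one_iff r).mpr (Subgroup.subset_normalClosure hr)

lemma hg1 : Commute ga (gb * gb) := by
  have h := mk_rel_one (Set.mem_insert _ _)
  rw [map_commutatorElement, commutatorElement_eq_one_iff_commute, map_pow, pow_two] at h
  exact h

lemma hg2 : Commute (ga * ga) gb := by
  have h := mk_rel_one (Set.mem_insert_of_mem _ rfl)
  rw [map_commutatorElement, commutatorElement_eq_one_iff_commute, map_pow, pow_two] at h
  exact h

def gc : PresentedGroup rels8 := ga * gb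
def gd : PresentedGroup rels8 := gb * ga

lemma hcd : Commute gc gd := by
  show gc * gd = gd * gc
  have e1 : gc * gd = ga * (gb * gb) * ga := by rw [gc, gd]; group
  have e2 : gd * gc = gb * (ga * ga) * gb := by rw [gd, gc]; group
  rw [e1, e2, hg1.eq, ← hg2.eq]
  calc gb * gb * ga * ga = (gb * gb) * (ga * ga) := by group
    _ = (ga * ga) * (gb * gb) := ((hg2.mul_right hg2).symm).eq
    _ = ga * ga * gb * gb := by group

lemma conj_c : ga * gc * ga⁻¹ = gd := by
  have : ga * gc * ga⁻¹ = (ga * ga) * gb * ga⁻¹ := by rw [gc]; group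
  rw [this, hg2.eq, gd]
  group

lemma conj_d : ga * gd * ga⁻¹ = gc := by
  rw [gd, gc]; group

/-! ### The backward homomorphism -/

def f1 : Multiplicative (Fin 2 → ℤ) →* PresentedGroup rels8 :=
  MonoidHom.mk' (fun v => gc ^ (toAdd v 0) * gd ^ (toAdd v 1)) (by
    intro v w
    show gc ^ ((toAdd v + toAdd w) 0) * gd ^ ((toAdd v + toAdd w) 1) = _
    simp only [Pi.add_apply, zpow_add]
    calc gc ^ toAdd v 0 * gc ^ toAdd w 0 * (gd ^ toAdd v 1 * gd ^ toAdd w 1)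
        = gc ^ toAdd v 0 * (gc ^ toAdd w 0 * gd ^ toAdd v 1) * gd ^ toAdd w 1 := by group
      _ = gc ^ toAdd v 0 * (gd ^ toAdd v 1 * gc ^ toAdd w 0) * gd ^ toAdd w 1 := by
            rw [(hcd.zpow_zpow _ _).eq]
      _ = gc ^ toAdd v 0 * gd ^ toAdd v 1 * (gc ^ toAdd w 0 * gd ^ toAdd w 1) := by group)

lemma f1_apply (v) : f1 v = gc ^ (toAdd v 0) * gd ^ (toAdd v 1) := rfl

lemma f1_swap (v) : f1 (swapAut v) = ga * f1 v * ga⁻¹ := by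
  rw [f1_apply, f1_apply]
  have h0 : toAdd (swapAut v) 0 = toAdd v 1 := by simp [swapAut]
  have h1 : toAdd (swapAut v) 1 = toAdd v 0 := by simp [swapAut, Equiv.swap_apply_def]
  rw [h0, h1]
  calc gc ^ toAdd v 1 * gd ^ toAdd v 0
      = gd ^ toAdd v 0 * gc ^ toAdd v 1 := (hcd.zpow_zpow _ _).eq
    _ = (ga * gc * ga⁻¹) ^ toAdd v 0 * (ga * gd * ga⁻¹) ^ toAdd v 1 := by
          rw [conj_c, conj_d]
    _ = ga * (gc ^ toAdd v 0 * gd ^ toAdd v 1) * ga⁻¹ := by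
          rw [conj_zpow, conj_zpow]; group

lemma swap_swap (v) : swapAut (swapAut v) = v := by
  have := congrArg (fun (f : MulAut (Multiplicative (Fin 2 → ℤ))) => f v) swapAut_sq
  simpa using this

lemma f1_swap' (v) : f1 (swapAut v) = ga⁻¹ * f1 v * ga := by
  conv_rhs => rw [← swap_swap v, f1_swap]
  group

lemma f1_swap_zpow (t : ℤ) : ∀ v, f1 ((swapAut ^ t) v) = ga ^ t * f1 v * (ga ^ t)⁻¹ := by
  induction t using Int.induction_on with
  | zero => simp
  | succ n ih =>
      intro v
      have h : (swapAut ^ ((n : ℤ) + 1)) v = (swapAut ^ (n : ℤ)) (swapAut v) := by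
        rw [zpow_add_one]; rfl
      rw [h, ih (swapAut v), f1_swap, zpow_add_one]
      group
  | pred n ih =>
      intro v
      have h : (swapAut ^ (-(n : ℤ) - 1)) v = (swapAut ^ (-(n : ℤ))) (swapAut v) := by
        rw [zpow_sub_one]
        rfl
      rw [h, ih (swapAut v), f1_swap', zpow_sub_one]
      group

def f2 : Multiplicative ℤ →* PresentedGroup rels8 := zpowersHom _ ga

lemma hcompat : ∀ g : Multiplicative ℤ,
    f1.comp (φ8 g).toMonoidHom = (MulAut.conj (f2 g)).toMonoidHom.comp f1 := by
  intro g
  refine MonoidHom.ext fun v => ?_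
  simp only [MonoidHom.comp_apply, MulEquiv.coe_toMonoidHom, MulAut.conj_apply]
  show f1 ((swapAut ^ (toAdd g)) v) = _
  rw [f1_swap_zpow]
  rfl

def bwd : Hp →* PresentedGroup rels8 := SemidirectProduct.lift f1 f2 hcompat

/-! ### The two composites are the identity -/

lemma bwd_fwd : bwd.comp fwd = MonoidHom.id _ := by
  apply PresentedGroup.ext
  intro x
  fin_cases x
  · show bwd (fwd (.of 0)) = ga
    rw [fwd_of0, a']
    show f1 1 * f2 (ofAdd 1) = ga
    simp [f2, zpowersHom_apply]
  · show bwd (fwd (.of 1)) = gb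
    rw [fwd_of1, b', map_mul]
    show f1 e1 * (f1 1 * f2 (ofAdd (-1))) = gb
    have h1 : f1 e1 = gd := by
      rw [f1_apply]
      have h0 : toAdd e1 0 = 0 := by simp [e1, Pi.single_eq_of_ne]
      have h1 : toAdd e1 1 = 1 := by simp [e1]
      rw [h0, h1]; group
    rw [h1, map_one, one_mul]
    show gd * ga ^ (-1 : ℤ) = gb
    rw [gd]
    group

lemma fwd_gc : fwd gc = inl e0 := by
  rw [gc, ga, gb, map_mul, fwd_of0, fwd_of1, a', b', ← mul_assoc, inr_mul_inl, φ8_one, swap_e1,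
    mul_assoc, inr_mul_inr, ← ofAdd_add]
  norm_num

lemma fwd_gd : fwd gd = inl e1 := by
  rw [gd, ga, gb, map_mul, fwd_of0, fwd_of1, a', b', mul_assoc, inr_mul_inr, ← ofAdd_add]
  norm_num

lemma fwd_bwd : fwd.comp bwd = MonoidHom.id _ := by
  apply SemidirectProduct.hom_ext
  · refine MonoidHom.ext fun v => ?_
    show fwd (bwd (inl v)) = inl v
    rw [bwd, SemidirectProduct.lift_inl, f1_apply, map_mul, map_zpow, map_zpow, fwd_gc,
      fwd_gd, ← map_zpow, ← map_zpow, inl_mul_inl]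
    congr 1
    apply Multiplicative.toAdd.injective
    funext i
    have : toAdd (e0 ^ toAdd v 0 * e1 ^ toAdd v 1) =
        toAdd v 0 • (Pi.single 0 1 : Fin 2 → ℤ) + toAdd v 1 • (Pi.single 1 1 : Fin 2 → ℤ) := by
      simp [e0, e1, ← ofAdd_zsmul]
    rw [this]
    fin_cases i <;> simp [Pi.single_eq_of_ne]
  · apply MonoidHom.ext_mint
    show fwd (bwd (inr (ofAdd 1))) = inr (ofAdd 1)
    rw [bwd, SemidirectProduct.lift_inr]
    show fwd (ga ^ (1:ℤ)) = _
    rw [zpow_one, ga, fwd_of0, a']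

end Stmt8Aux

/-- The group `⟨a, b | [a,b²] = 1, [a²,b] = 1⟩` is isomorphic to the semidirect product
`ℤ² ⋊_φ ℤ` where `φ(1)` is the coordinate swap `[[0,1],[1,0]]`. -/
theorem stmt_8 :
    Nonempty (PresentedGroup rels8 ≃*
      ((Multiplicative (Fin 2 → ℤ)) ⋊[φ8] Multiplicative ℤ)) :=
  ⟨MonoidHom.toMulEquiv Stmt8Aux.fwd Stmt8Aux.bwd Stmt8Aux.bwd_fwd Stmt8Aux.fwd_bwd⟩
end

section
/- Let Γ₁, …, Γₘ be torsion-free groups such that for every index j and every non-trivial element γ ∈ Γ_j, the centralizer C_{Γ_j}(γ) is infinite cyclic, and such that each Γ_j is not isomorphic to ℤ and contains no non-trivial normal abelian subgroup of the form ℤ. Then every automorphism f of Γ = Γ₁ × ⋯ × Γₘ permutes the factors: there is a permutation σ of {1,…,m} with f(Γ_j) = Γ_{σ(j)} for all j. -/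
/-- A monoid is torsion-free if no nontrivial elements have finite order
(the December 2024 Mathlib definition, since removed). -/
def Monoid.IsTorsionFree (G : Type*) [Monoid G] : Prop :=
  ∀ g : G, g ≠ 1 → ¬IsOfFinOrder g

open Subgroup

section Aux

variable {G H : Type*} [Group G] [Group H]

/-- image of a centralizer under a mul-equiv. -/
lemma aux_map_centralizer (f : G ≃* H) (S : Set G) :
    (Subgroup.centralizer S).map f.toMonoidHom = Subgroup.centralizer (f '' S) := by
  ext x
  simp only [Subgroup.mem_map, Subgroup.mem_centralizer_iff]
  constructor
  · rintro ⟨y, hy, rfl⟩ _ ⟨s, hs, rfl⟩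
    simp only [MulEquiv.coe_toMonoidHom, ← map_mul, hy s hs]
  · intro hx
    refine ⟨f.symm x, fun h hs => f.injective ?_, by simp⟩
    have := hx (f h) ⟨h, hs, rfl⟩
    simp only [map_mul, MulEquiv.apply_symm_apply]
    simpa using this

/-- commuting in a subgroup isomorphic to an abelian group -/
lemma aux_comm_of_equiv {K : Subgroup G} (e : K ≃* Multiplicative ℤ)
    {u v : G} (hu : u ∈ K) (hv : v ∈ K) : u * v = v * u := by
  have : (⟨u, hu⟩ : K) * ⟨v, hv⟩ = ⟨v, hv⟩ * ⟨u, hu⟩ :=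
    e.injective (by rw [map_mul, map_mul, mul_comm])
  exact congrArg Subtype.val this

/-- the "center of the centralizer" of an element, as a subgroup of the ambient group. -/
def Zc (g : G) : Subgroup G :=
  Subgroup.centralizer {g} ⊓ Subgroup.centralizer ↑(Subgroup.centralizer {g})

lemma aux_Zc_map (f : G ≃* H) (g : G) :
    Zc (f g) = (Zc g).map f.toMonoidHom := by
  have h1 : (Subgroup.centralizer {g}).map f.toMonoidHom
      = Subgroup.centralizer {f g} := by
    rw [aux_map_centralizer, Set.image_singleton]
  rw [Zc, Zc, Subgroup.map_inf _ _ _ f.injective, h1, aux_map_centralizer]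
  congr 1
  rw [← h1]
  rfl

end Aux

section Pi

variable {I : Type*} [DecidableEq I] {Γ : I → Type*} [∀ i, Group (Γ i)]

lemma aux_comm_iff (a b : ∀ i, Γ i) : a * b = b * a ↔ ∀ i, a i * b i = b i * a i := by
  constructor
  · intro h i; exact congrFun h i
  · intro h; funext i; exact h i

lemma aux_center_trivial {j : I}
    (hcent : ∀ γ : Γ j, γ ≠ 1 → Nonempty ((Subgroup.centralizer {γ}) ≃* Multiplicative ℤ))
    (hnotZ : ¬ Nonempty (Γ j ≃* Multiplicative ℤ))
    (z : Γ j) (hz : ∀ x, x * z = z * x) : z = 1 := by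
  by_contra h
  obtain ⟨e⟩ := hcent z h
  have htop : Subgroup.centralizer ({z} : Set (Γ j)) = ⊤ := by
    ext x
    simp only [Subgroup.mem_centralizer_iff, Set.mem_singleton_iff, Subgroup.mem_top, iff_true]
    rintro h rfl
    exact (hz x).symm
  exact hnotZ ⟨Subgroup.topEquiv.symm.trans ((MulEquiv.subgroupCongr htop).symm.trans e)⟩

lemma aux_single_mem_centralizer {g : ∀ i, Γ i} (j : I) :
    Pi.mulSingle j (g j) ∈ Subgroup.centralizer {g} := by
  rw [Subgroup.mem_centralizer_iff]
  rintro h rfl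
  rw [aux_comm_iff]
  intro i
  by_cases hij : i = j
  · subst hij; rw [Pi.mulSingle_eq_same]
  · rw [Pi.mulSingle_eq_of_ne hij, mul_one, one_mul]

lemma aux_single_mem_Zc {g : ∀ i, Γ i} (j : I)
    (hcent : ∀ γ : Γ j, γ ≠ 1 → Nonempty ((Subgroup.centralizer {γ}) ≃* Multiplicative ℤ))
    (hgj : g j ≠ 1) :
    Pi.mulSingle j (g j) ∈ Zc g := by
  obtain ⟨e⟩ := hcent (g j) hgj
  rw [Zc, Subgroup.mem_inf]
  refine ⟨aux_single_mem_centralizer j, ?_⟩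
  rw [Subgroup.mem_centralizer_iff]
  intro y hy
  rw [aux_comm_iff]
  intro i
  by_cases hij : i = j
  · subst hij
    rw [Pi.mulSingle_eq_same]
    have hyc : y i ∈ Subgroup.centralizer ({g i} : Set (Γ i)) := by
      rw [Subgroup.mem_centralizer_iff]
      rintro h rfl
      have := hy
      rw [SetLike.mem_coe, Subgroup.mem_centralizer_iff] at this
      exact congrFun (this g rfl) i
    have hgc : g i ∈ Subgroup.centralizer ({g i} : Set (Γ i)) := by
      rw [Subgroup.mem_centralizer_iff]; rintro h rfl; rfl
    exact aux_comm_of_equiv e hyc hgc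
  · rw [Pi.mulSingle_eq_of_ne hij, mul_one, one_mul]

/-- support-singleton elements have Zc ≅ ℤ -/
lemma aux_Zc_single {j : I} (γ : Γ j) (hγ : γ ≠ 1)
    (hcent : ∀ i, ∀ δ : Γ i, δ ≠ 1 → Nonempty ((Subgroup.centralizer {δ}) ≃* Multiplicative ℤ))
    (hnotZ : ∀ i, ¬ Nonempty (Γ i ≃* Multiplicative ℤ)) :
    Zc (Pi.mulSingle j γ) =
      (Subgroup.centralizer {γ}).map (MonoidHom.mulSingle Γ j) := by
  obtain ⟨e⟩ := hcent j γ hγ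
  ext x
  rw [Zc, Subgroup.mem_inf]
  constructor
  · rintro ⟨h1, h2⟩
    rw [Subgroup.mem_centralizer_iff] at h1
    have h1' := h1 (Pi.mulSingle j γ) rfl
    rw [aux_comm_iff] at h1'
    rw [Subgroup.mem_centralizer_iff] at h2
    -- coordinates away from j are trivial
    have hx1 : ∀ i, i ≠ j → x i = 1 := by
      intro i hij
      apply aux_center_trivial (hcent i) (hnotZ i)
      intro a
      have hmem : Pi.mulSingle i a ∈ (Subgroup.centralizer {Pi.mulSingle j γ} : Subgroup (∀ i, Γ i)) := by
        rw [Subgroup.mem_centralizer_iff]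
        rintro h rfl
        exact (Pi.mulSingle_commute (Ne.symm hij) γ a).eq
      have := h2 (Pi.mulSingle i a) hmem
      rw [aux_comm_iff] at this
      have := this i
      rwa [Pi.mulSingle_eq_same] at this
    rw [Subgroup.mem_map]
    refine ⟨x j, ?_, ?_⟩
    · rw [Subgroup.mem_centralizer_iff]
      rintro h rfl
      have := h1' j
      rwa [Pi.mulSingle_eq_same] at this
    · funext i
      by_cases hij : i = j
      · subst hij; simp [MonoidHom.mulSingle_apply, Pi.mulSingle_eq_same]
      · simp [MonoidHom.mulSingle_apply, Pi.mulSingle_eq_of_ne hij, hx1 i hij]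
  · rintro ⟨c, hcmem, rfl⟩
    have hc := hcmem
    rw [SetLike.mem_coe, Subgroup.mem_centralizer_iff] at hc
    have hcγ : γ * c = c * γ := hc γ rfl
    constructor
    · rw [Subgroup.mem_centralizer_iff]
      rintro h rfl
      rw [aux_comm_iff]
      intro i
      by_cases hij : i = j
      · subst hij
        simp only [MonoidHom.mulSingle_apply, Pi.mulSingle_eq_same]
        exact hcγ
      · simp [MonoidHom.mulSingle_apply, Pi.mulSingle_eq_of_ne hij]
    · rw [Subgroup.mem_centralizer_iff]
      intro y hy
      rw [SetLike.mem_coe, Subgroup.mem_centralizer_iff] at hy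
      have hyg := hy (Pi.mulSingle j γ) rfl
      rw [aux_comm_iff] at hyg
      have hyj : y j ∈ Subgroup.centralizer ({γ} : Set (Γ j)) := by
        rw [Subgroup.mem_centralizer_iff]
        rintro h rfl
        have := hyg j
        rwa [Pi.mulSingle_eq_same] at this
      rw [aux_comm_iff]
      intro i
      by_cases hij : i = j
      · subst hij
        simp only [MonoidHom.mulSingle_apply, Pi.mulSingle_eq_same]
        exact aux_comm_of_equiv e hyj hcmem
      · simp [MonoidHom.mulSingle_apply, Pi.mulSingle_eq_of_ne hij]

lemma aux_not_Z_of_two {g : ∀ i, Γ i} {j k : I} (hjk : j ≠ k)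
    (hgj : g j ≠ 1) (hgk : g k ≠ 1)
    (htf : ∀ i, Monoid.IsTorsionFree (Γ i))
    (hcent : ∀ i, ∀ δ : Γ i, δ ≠ 1 → Nonempty ((Subgroup.centralizer {δ}) ≃* Multiplicative ℤ)) :
    ¬ Nonempty (Zc g ≃* Multiplicative ℤ) := by
  rintro ⟨e⟩
  haveI : IsCyclic (Zc g) := isCyclic_of_surjective _ e.symm.surjective
  obtain ⟨c, hc⟩ := IsCyclic.exists_generator (α := Zc g)
  have ha := aux_single_mem_Zc j (hcent j) hgj
  have hb := aux_single_mem_Zc k (hcent k) hgk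
  obtain ⟨p, hp⟩ := Subgroup.mem_zpowers_iff.mp (hc ⟨_, ha⟩)
  obtain ⟨q, hq⟩ := Subgroup.mem_zpowers_iff.mp (hc ⟨_, hb⟩)
  have hp' : ((c : ∀ i, Γ i)) ^ p = Pi.mulSingle j (g j) := by
    have := congrArg Subtype.val hp
    rwa [SubgroupClass.coe_zpow] at this
  have hq' : ((c : ∀ i, Γ i)) ^ q = Pi.mulSingle k (g k) := by
    have := congrArg Subtype.val hq
    rwa [SubgroupClass.coe_zpow] at this
  have hpne : p ≠ 0 := by
    rintro rfl
    have := congrFun hp' j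
    rw [zpow_zero, Pi.one_apply, Pi.mulSingle_eq_same] at this
    exact hgj this.symm
  have hck : (c : ∀ i, Γ i) k = 1 := by
    have h1 : ((c : ∀ i, Γ i) k) ^ p = 1 := by
      have := congrFun hp' k
      rw [Pi.pow_apply] at this
      rw [this, Pi.mulSingle_eq_of_ne (Ne.symm hjk)]
    by_contra hck
    exact (htf k) _ hck (isOfFinOrder_iff_zpow_eq_one.mpr ⟨p, hpne, h1⟩)
  apply hgk
  have := congrFun hq' k
  rw [Pi.pow_apply, hck, one_zpow, Pi.mulSingle_eq_same] at this
  exact this.symm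

lemma aux_char
    (htf : ∀ i, Monoid.IsTorsionFree (Γ i))
    (hcent : ∀ i, ∀ δ : Γ i, δ ≠ 1 → Nonempty ((Subgroup.centralizer {δ}) ≃* Multiplicative ℤ))
    (hnotZ : ∀ i, ¬ Nonempty (Γ i ≃* Multiplicative ℤ)) (g : ∀ i, Γ i) :
    (g ≠ 1 ∧ Nonempty (Zc g ≃* Multiplicative ℤ)) ↔
      ∃ l, g l ≠ 1 ∧ ∀ i, i ≠ l → g i = 1 := by
  constructor
  · rintro ⟨hg, hne⟩
    have : ∃ l, g l ≠ 1 := by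
      by_contra h
      push_neg at h
      exact hg (funext fun i => h i)
    obtain ⟨l, hl⟩ := this
    refine ⟨l, hl, fun i hil => ?_⟩
    by_contra hi
    exact aux_not_Z_of_two (Ne.symm hil) hl hi htf hcent hne
  · rintro ⟨l, hl, hall⟩
    have hg : g = Pi.mulSingle l (g l) := by
      funext i
      by_cases h : i = l
      · subst h; rw [Pi.mulSingle_eq_same]
      · rw [Pi.mulSingle_eq_of_ne h]; exact hall i h
    refine ⟨fun h1 => hl (by rw [h1]; rfl), ?_⟩
    rw [hg, aux_Zc_single (g l) hl hcent hnotZ]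
    obtain ⟨e⟩ := hcent l (g l) hl
    have hinj : Function.Injective ⇑(MonoidHom.mulSingle Γ l) := fun a b h =>
      Pi.mulSingle_injective l h
    exact ⟨(Subgroup.equivMapOfInjective _ (MonoidHom.mulSingle Γ l) hinj).symm.trans e⟩

lemma aux_inv (f : (∀ i, Γ i) ≃* (∀ i, Γ i)) (g : ∀ i, Γ i) :
    Nonempty (Zc (f g) ≃* Multiplicative ℤ) ↔ Nonempty (Zc g ≃* Multiplicative ℤ) := by
  rw [aux_Zc_map f g]
  constructor
  · rintro ⟨e⟩
    exact ⟨(Subgroup.equivMapOfInjective _ _ f.injective).trans e⟩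
  · rintro ⟨e⟩
    exact ⟨(Subgroup.equivMapOfInjective _ _ f.injective).symm.trans e⟩

lemma aux_mem_range (k : I) (x : ∀ i, Γ i) :
    x ∈ (MonoidHom.mulSingle Γ k).range ↔ ∀ i, i ≠ k → x i = 1 := by
  constructor
  · rintro ⟨γ, rfl⟩ i hik
    simp [MonoidHom.mulSingle_apply, Pi.mulSingle_eq_of_ne hik]
  · intro h
    refine ⟨x k, funext fun i => ?_⟩
    by_cases hik : i = k
    · subst hik; simp [MonoidHom.mulSingle_apply, Pi.mulSingle_eq_same]
    · simp [MonoidHom.mulSingle_apply, Pi.mulSingle_eq_of_ne hik, h i hik]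

lemma aux_main
    (htf : ∀ i, Monoid.IsTorsionFree (Γ i))
    (hcent : ∀ i, ∀ δ : Γ i, δ ≠ 1 → Nonempty ((Subgroup.centralizer {δ}) ≃* Multiplicative ℤ))
    (hnotZ : ∀ i, ¬ Nonempty (Γ i ≃* Multiplicative ℤ))
    (f : (∀ i, Γ i) ≃* (∀ i, Γ i)) (j : I) (γ₀ : Γ j) (hγ₀ : γ₀ ≠ 1) :
    ∃ k, ((MonoidHom.mulSingle Γ j).range).map f.toMonoidHom ≤
        (MonoidHom.mulSingle Γ k).range ∧ (f (Pi.mulSingle j γ₀)) k ≠ 1 := by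
  have hGoodf : ∀ y : ∀ i, Γ i, y ≠ 1 → (∀ i, i ≠ j → y i = 1) →
      ∃ l, (f y) l ≠ 1 ∧ ∀ i, i ≠ l → (f y) i = 1 := by
    intro y hy1 hy2
    have hyj : y j ≠ 1 := by
      intro h
      exact hy1 (funext fun i => by
        by_cases hij : i = j
        · subst hij; exact h
        · exact hy2 i hij)
    have hGy : y ≠ 1 ∧ Nonempty (Zc y ≃* Multiplicative ℤ) :=
      (aux_char htf hcent hnotZ y).mpr ⟨j, hyj, hy2⟩
    have hfy1 : f y ≠ 1 := fun h => hGy.1 (f.injective (by rw [h, map_one]))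
    exact (aux_char htf hcent hnotZ (f y)).mp ⟨hfy1, (aux_inv f y).mpr hGy.2⟩
  set g₀ := Pi.mulSingle j γ₀ with hg₀def
  have hg₀1 : g₀ ≠ 1 := fun h => hγ₀ (by
    have := congrFun h j
    simp only [hg₀def, Pi.mulSingle_eq_same, Pi.one_apply] at this
    exact this)
  have hg₀2 : ∀ i, i ≠ j → g₀ i = 1 := fun i hij => by
    rw [hg₀def]; exact Pi.mulSingle_eq_of_ne hij γ₀
  obtain ⟨k, hk1, hk2⟩ := hGoodf g₀ hg₀1 hg₀2
  refine ⟨k, ?_, hk1⟩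
  intro x hx
  rw [Subgroup.mem_map] at hx
  obtain ⟨y, hy, rfl⟩ := hx
  rw [aux_mem_range] at hy
  rw [aux_mem_range]
  by_cases hy1 : y = 1
  · subst hy1
    intro i hik
    rw [map_one, Pi.one_apply]
  obtain ⟨l, hl1, hl2⟩ := hGoodf y hy1 hy
  by_cases hlk : l = k
  · subst hlk; exact hl2
  exfalso
  by_cases hz1 : y * g₀ = 1
  · have hyg : y = g₀⁻¹ := by
      rw [eq_inv_iff_mul_eq_one]; exact hz1
    apply hl1
    rw [hyg, map_inv, Pi.inv_apply, hk2 l hlk, inv_one]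
  · have hz2 : ∀ i, i ≠ j → (y * g₀) i = 1 := fun i hij => by
      rw [Pi.mul_apply, hy i hij, hg₀2 i hij, one_mul]
    obtain ⟨r, hr1, hr2⟩ := hGoodf (y * g₀) hz1 hz2
    have hfz : f (y * g₀) = f y * f g₀ := map_mul f y g₀
    have hrl : r = l := by
      by_contra hrl
      apply hl1
      have := hr2 l (fun h => hrl h.symm)
      rw [hfz, Pi.mul_apply, hk2 l hlk, mul_one] at this
      exact this
    have hrk : r = k := by
      by_contra hrk
      apply hk1
      have := hr2 k (fun h => hrk h.symm)
      rw [hfz, Pi.mul_apply, hl2 k (fun h => hlk h.symm), one_mul] at this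
      exact this
    exact hlk (hrl ▸ hrk)

end Pi
/-- Let `Γ₁, …, Γₘ` be torsion-free groups in which centralizers of non-trivial elements are
infinite cyclic, no `Γ_j` is isomorphic to `ℤ`, and no `Γ_j` has a non-trivial normal
subgroup isomorphic to `ℤ`. Then every automorphism of `Γ₁ × ⋯ × Γₘ` permutes the factors. -/
theorem stmt_10 (m : ℕ) (Γ : Fin m → Type*) [∀ j, Group (Γ j)]
    (htf : ∀ j, Monoid.IsTorsionFree (Γ j))
    (hcent : ∀ j (γ : Γ j), γ ≠ 1 →
      Nonempty ((Subgroup.centralizer {γ}) ≃* Multiplicative ℤ))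
    (hnotZ : ∀ j, ¬ Nonempty (Γ j ≃* Multiplicative ℤ))
    (hnoNormalZ : ∀ j (N : Subgroup (Γ j)), N.Normal → ¬ Nonempty (N ≃* Multiplicative ℤ))
    (f : (∀ j, Γ j) ≃* (∀ j, Γ j)) :
    ∃ σ : Equiv.Perm (Fin m), ∀ j,
      ((MonoidHom.mulSingle Γ j).range).map f.toMonoidHom =
        (MonoidHom.mulSingle Γ (σ j)).range := by
  classical
  have hbot : ∀ j, (¬ ∃ γ : Γ j, γ ≠ 1) → (MonoidHom.mulSingle Γ j).range = ⊥ := by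
    intro j h
    push_neg at h
    rw [eq_bot_iff]
    rintro x ⟨γ, rfl⟩
    rw [Subgroup.mem_bot, h γ]
    exact map_one _
  have hne : ∀ (j k : Fin m), (∃ γ : Γ j, γ ≠ 1) →
      (MonoidHom.mulSingle Γ j).range ≤ (MonoidHom.mulSingle Γ k).range → j = k := by
    intro j k hj hle
    obtain ⟨γ, hγ⟩ := hj
    by_contra hjk
    have hmem : Pi.mulSingle j γ ∈ (MonoidHom.mulSingle Γ j).range := ⟨γ, rfl⟩
    have := (aux_mem_range k _).mp (hle hmem) j hjk
    rw [Pi.mulSingle_eq_same] at this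
    exact hγ this
  have hmain : ∀ j, (∃ γ : Γ j, γ ≠ 1) → ∃ k,
      ((MonoidHom.mulSingle Γ j).range).map f.toMonoidHom =
        (MonoidHom.mulSingle Γ k).range ∧ (∃ δ : Γ k, δ ≠ 1) := by
    intro j hj
    obtain ⟨γ₀, hγ₀⟩ := hj
    obtain ⟨k, hle, hk⟩ := aux_main htf hcent hnotZ f j γ₀ hγ₀
    obtain ⟨k', hle', hk'⟩ := aux_main htf hcent hnotZ f.symm k _ hk
    have h1 : (MonoidHom.mulSingle Γ j).range ≤ (MonoidHom.mulSingle Γ k').range := by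
      intro x hxmem
      have h2 := hle (Subgroup.mem_map_of_mem _ hxmem)
      have h4 := hle' (Subgroup.mem_map_of_mem f.symm.toMonoidHom h2)
      rwa [show f.symm.toMonoidHom (f.toMonoidHom x) = x from f.symm_apply_apply x] at h4
    have hk'j : j = k' := hne j k' ⟨γ₀, hγ₀⟩ h1
    refine ⟨k, le_antisymm hle ?_, ⟨f (Pi.mulSingle j γ₀) k, hk⟩⟩
    intro x hx
    have h4 := hle' (Subgroup.mem_map_of_mem f.symm.toMonoidHom hx)
    rw [← hk'j] at h4
    exact Subgroup.mem_map.mpr ⟨f.symm x, h4, f.apply_symm_apply x⟩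
  let t : Fin m → Fin m := fun j =>
    if h : ∃ γ : Γ j, γ ≠ 1 then Classical.choose (hmain j h) else j
  have ht1 : ∀ j (h : ∃ γ : Γ j, γ ≠ 1),
      ((MonoidHom.mulSingle Γ j).range).map f.toMonoidHom =
        (MonoidHom.mulSingle Γ (t j)).range ∧ (∃ δ : Γ (t j), δ ≠ 1) := by
    intro j h
    have hteq : t j = Classical.choose (hmain j h) := dif_pos h
    rw [hteq]
    exact Classical.choose_spec (hmain j h)
  have ht2 : ∀ j, ¬(∃ γ : Γ j, γ ≠ 1) → t j = j := fun j h => by simp only [t, dif_neg h]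
  have htinj : Function.Injective t := by
    intro a b hab
    by_cases ha : ∃ γ : Γ a, γ ≠ 1 <;> by_cases hb : ∃ γ : Γ b, γ ≠ 1
    · have h1 := (ht1 a ha).1
      have h2 := (ht1 b hb).1
      rw [hab, ← h2] at h1
      have h3 : (MonoidHom.mulSingle Γ a).range = (MonoidHom.mulSingle Γ b).range :=
        Subgroup.map_injective f.injective h1
      exact hne a b ha h3.le
    · have h5 := (ht1 a ha).2
      rw [hab, ht2 b hb] at h5
      exact absurd h5 hb
    · have h5 := (ht1 b hb).2
      rw [← hab, ht2 a ha] at h5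
      exact absurd h5 ha
    · rw [ht2 a ha, ht2 b hb] at hab
      exact hab
  refine ⟨Equiv.ofBijective t (Finite.injective_iff_bijective.mp htinj), fun j => ?_⟩
  show ((MonoidHom.mulSingle Γ j).range).map f.toMonoidHom = (MonoidHom.mulSingle Γ (t j)).range
  by_cases h : ∃ γ : Γ j, γ ≠ 1
  · exact (ht1 j h).1
  · rw [ht2 j h, hbot j h, Subgroup.map_bot]
end

section
/- Let G be a group and suppose there is a constant C such that every finite subgroup F ≤ G has a homomorphism ψ_F : F → O (for a fixed Minkowski group O with constant C) whose kernel embeds into a torus, i.e., ker ψ_F is isomorphic to a subgroup of (ℝ/ℤ)^k. Then every finite subgroup F of G that is of the form (ℤ/a)^b with b > k satisfies a ≤ C!·C. -/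
/-- The `n`-torsion of the circle `ℝ/ℤ` is covered by the `n` points `m/n`. -/
lemma addCircle_torsion_surj (n : ℕ) (hn : 0 < n) :
    ∃ g : Fin n → {u : AddCircle (1 : ℝ) // n • u = 0}, Function.Surjective g := by
  haveI : Fact ((0:ℝ) < 1) := ⟨zero_lt_one⟩
  have hn' : (n : ℝ) ≠ 0 := Nat.cast_ne_zero.mpr hn.ne'
  refine ⟨fun m => ⟨(((m : ℕ) : ℝ) / (n : ℝ) : ℝ), ?_⟩, ?_⟩
  · show n • ((((m : ℕ) : ℝ) / (n : ℝ) : ℝ) : AddCircle (1:ℝ)) = 0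
    rw [← AddCircle.coe_nsmul, nsmul_eq_mul, mul_div_cancel₀ _ hn']
    exact (AddCircle.coe_eq_zero_iff _).mpr ⟨(m : ℕ), by simp⟩
  · rintro ⟨u, hu⟩
    have hfin : IsOfFinAddOrder u := isOfFinAddOrder_iff_nsmul_eq_zero.mpr ⟨n, hn, hu⟩
    have hdpos : 0 < addOrderOf u := hfin.addOrderOf_pos
    have hdvd : addOrderOf u ∣ n := addOrderOf_dvd_of_nsmul_eq_zero hu
    obtain ⟨m, hm, -, he⟩ := (AddCircle.addOrderOf_eq_pos_iff hdpos).mp rfl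
    set d := addOrderOf u
    have hnd : 0 < n / d := Nat.div_pos (Nat.le_of_dvd hn hdvd) hdpos
    refine ⟨⟨m * (n / d), ?_⟩, ?_⟩
    · calc m * (n / d) < d * (n / d) := (Nat.mul_lt_mul_right hnd).mpr hm
        _ = n := Nat.mul_div_cancel' hdvd
    · apply Subtype.ext
      show ((((m * (n / d) : ℕ) : ℝ) / (n : ℝ) : ℝ) : AddCircle (1:ℝ)) = u
      rw [← he]
      congr 1
      have hcast : ((n / d : ℕ) : ℝ) = (n : ℝ) / (d : ℝ) := Nat.cast_div hdvd
        (Nat.cast_ne_zero.mpr hdpos.ne')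
      have hd' : (d : ℝ) ≠ 0 := Nat.cast_ne_zero.mpr hdpos.ne'
      push_cast [hcast]
      field_simp

/-- Suppose every finite subgroup `F` of `G` admits a homomorphism `ψ_F` to a fixed group `O`
whose finite subgroups all have order at most `C`, with `ker ψ_F` embedding into the torus
`(ℝ/ℤ)^k`. Then any finite subgroup of `G` of the form `(ℤ/a)^b` with `b > k` satisfies
`a ≤ C! · C`. -/
theorem stmt_12 {G O : Type*} [Group G] [Group O] (C k : ℕ)
    (hO : ∀ F : Subgroup O, Finite F → Nat.card F ≤ C)
    (h : ∀ F : Subgroup G, Finite F → ∃ ψ : F →* O,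
      ∃ f : ψ.ker →* Multiplicative (Fin k → AddCircle (1 : ℝ)), Function.Injective f)
    (F : Subgroup G) (hF : Finite F) (a b : ℕ) (hb : b > k)
    (hiso : Nonempty (F ≃* Multiplicative (Fin b → ZMod a))) :
    a ≤ C.factorial * C := by
  obtain ⟨e⟩ := hiso
  obtain ⟨ψ, f, hf⟩ := h F hF
  -- cardinality of F
  have hcardF : Nat.card F = a ^ b := by
    rw [Nat.card_congr (e.toEquiv.trans Multiplicative.toAdd), Nat.card_fun, Nat.card_zmod,
      Nat.card_eq_fintype_card, Fintype.card_fin]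
  have ha : 0 < a := by
    rcases Nat.eq_zero_or_pos a with rfl | h'
    · have hpos : 0 < Nat.card F := Nat.card_pos
      rw [hcardF, zero_pow (by omega)] at hpos
      omega
    · exact h'
  -- the index of the kernel is at most C
  haveI : Finite ψ.range := Finite.of_surjective _ ψ.rangeRestrict_surjective
  have hidx : ψ.ker.index ≤ C := by
    rw [Subgroup.index_ker]; exact hO ψ.range inferInstance
  -- torsion bound on the torus
  obtain ⟨g, hg⟩ := addCircle_torsion_surj a ha
  haveI : Finite {u : AddCircle (1 : ℝ) // a • u = 0} := Finite.of_surjective _ hg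
  have hT : Nat.card {u : AddCircle (1 : ℝ) // a • u = 0} ≤ a := by
    have := Nat.card_le_card_of_surjective _ hg
    simpa using this
  let eq1 : {w : Fin k → AddCircle (1:ℝ) // a • w = 0} ≃
      (Fin k → {u : AddCircle (1 : ℝ) // a • u = 0}) :=
    { toFun := fun w i => ⟨w.1 i, congr_fun w.2 i⟩
      invFun := fun v => ⟨fun i => (v i).1, funext fun i => (v i).2⟩
      left_inv := fun w => rfl
      right_inv := fun v => rfl }
  haveI : Finite {w : Fin k → AddCircle (1:ℝ) // a • w = 0} := Finite.of_equiv _ eq1.symm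
  have hS : Nat.card {w : Fin k → AddCircle (1:ℝ) // a • w = 0} ≤ a ^ k := by
    have hfin : Nat.card (Fin k) = k := Nat.card_eq_fintype_card.trans (Fintype.card_fin k)
    rw [Nat.card_congr eq1, Nat.card_fun, hfin]
    exact Nat.pow_le_pow_left hT k
  -- every element of F has order dividing a
  have hpow : ∀ y : F, y ^ a = 1 := by
    intro y
    apply e.injective
    rw [map_pow, map_one]
    apply Multiplicative.toAdd.injective
    rw [toAdd_pow, toAdd_one]
    funext i
    show a • (Multiplicative.toAdd (e y) i) = 0
    rw [nsmul_eq_mul, ZMod.natCast_self, zero_mul]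
  -- the kernel embeds into the a-torsion of the torus
  have hmem : ∀ x : ψ.ker, a • Multiplicative.toAdd (f x) = 0 := by
    intro x
    have hx : x ^ a = 1 := by
      apply Subtype.ext
      rw [SubgroupClass.coe_pow, OneMemClass.coe_one]
      exact hpow _
    rw [← toAdd_pow, ← map_pow, hx, map_one, toAdd_one]
  have hinj : Function.Injective
      (fun x : ψ.ker => (⟨Multiplicative.toAdd (f x), hmem x⟩ :
        {w : Fin k → AddCircle (1:ℝ) // a • w = 0})) := by
    intro x y hxy
    exact hf (Multiplicative.toAdd.injective (congrArg Subtype.val hxy))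
  have hK : Nat.card ψ.ker ≤ a ^ k :=
    (Nat.card_le_card_of_injective _ hinj).trans hS
  -- combine
  have key : a ^ b ≤ a ^ k * C := by
    calc a ^ b = Nat.card ψ.ker * ψ.ker.index := by
          rw [Subgroup.card_mul_index, hcardF]
      _ ≤ a ^ k * C := Nat.mul_le_mul hK hidx
  have h1 : a ^ k * a ≤ a ^ k * C := by
    rw [← pow_succ]
    exact le_trans (Nat.pow_le_pow_right ha hb) key
  have haC : a ≤ C := Nat.le_of_mul_le_mul_left h1 (Nat.pow_pos ha)
  exact haC.trans (Nat.le_mul_of_pos_left C (Nat.factorial_pos C))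
end
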